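/- arXiv:2304.03154 — 2 statements merged into one kernel-verified Lean document; each statement's English description precedes it below -/
import Mathlib

section
/- Let f be a monic quartic Eisenstein polynomial over 𝒪_K such that the Galois closure group of L_f/K is isomorphic to S₄ or A₄ (equivalently, f has exactly one root in L_f). Let π be the image of X in L_f = K[X]/(f), and let σ₁, σ₂, σ₃, σ₄ be the four K-embeddings of L_f into a fixed algebraic closure of K, with σ₁ the identity. Then the three valuations v_K(σ_i(π) − π) for i = 2, 3, 4 are all equal. -/
open scoped Classical
open IntermediateField

noncomputable section

/-- The maximal ideal of a (local) commutative ring, defined as the Jacobson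
radical of the zero ideal; for a local ring this is the maximal ideal. -/
def maxIdl (R : Type*) [CommRing R] : Ideal R := (⊥ : Ideal R).jacobson

/-- The valuation of an ideal of a discrete valuation ring: the largest `n`
such that `I ⊆ 𝔪ⁿ`. -/
def idealVal {R : Type*} [CommRing R] (I : Ideal R) : ℕ :=
  sSup {n : ℕ | I ≤ maxIdl R ^ n}

/-- Any field extension of `ℚ₂` is a `ℤ₂`-algebra. -/
instance algZ2 (F : Type*) [Field F] [Algebra ℚ_[2] F] : Algebra ℤ_[2] F :=
  ((algebraMap ℚ_[2] F).comp (algebraMap ℤ_[2] ℚ_[2])).toAlgebra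

instance istZ2 (K L : Type*) [Field K] [Field L] [Algebra ℚ_[2] K] [Algebra ℚ_[2] L]
    [Algebra K L] [IsScalarTower ℚ_[2] K L] : IsScalarTower ℤ_[2] K L :=
  IsScalarTower.of_algebraMap_eq fun x => by
    show algebraMap ℚ_[2] L (algebraMap ℤ_[2] ℚ_[2] x)
        = algebraMap K L (algebraMap ℚ_[2] K (algebraMap ℤ_[2] ℚ_[2] x))
    rw [← IsScalarTower.algebraMap_apply ℚ_[2] K L]

/-- The ring of integers of a `2`-adic field: the integral closure of `ℤ₂`. -/
abbrev OK (F : Type*) [Field F] [Algebra ℚ_[2] F] : Type _ :=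
  ↥(integralClosure ℤ_[2] F)

/-- The inclusion of rings of integers induced by an extension of 2-adic fields. -/
instance okAlgebra (K L : Type*) [Field K] [Field L] [Algebra ℚ_[2] K] [Algebra ℚ_[2] L]
    [Algebra K L] [IsScalarTower ℚ_[2] K L] : Algebra (OK K) (OK L) :=
  RingHom.toAlgebra
    { toFun := fun x => ⟨algebraMap K L x,
        IsIntegral.map (IsScalarTower.toAlgHom ℤ_[2] K L) x.2⟩
      map_one' := Subtype.ext (by simp)
      map_mul' := fun a b => Subtype.ext (by push_cast; simp)
      map_zero' := Subtype.ext (by simp)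
      map_add' := fun a b => Subtype.ext (by push_cast; simp) }

variable (K : Type) [Field K] [Algebra ℚ_[2] K]

/-- The residue cardinality `q` of a 2-adic field. -/
def resCard : ℕ := Nat.card (OK K ⧸ maxIdl (OK K))

/-- The absolute ramification index `e(K/ℚ₂)`, i.e. `v_K(2)`. -/
def eRam : ℕ := idealVal (Ideal.span {(2 : OK K)})

/-- The absolute inertia degree `f(K/ℚ₂)`. -/
def fInertia : ℕ :=
  Ideal.inertiaDeg' (maxIdl ℤ_[2]) (maxIdl (OK K))

/-- The discriminant ideal of an extension of 2-adic fields: the ideal of `𝒪_K`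
generated by the discriminants of all `[L:K]`-tuples of integral elements. -/
def discIdl (K L : Type*) [Field K] [Field L] [Algebra ℚ_[2] K] [Algebra ℚ_[2] L]
    [Algebra K L] [IsScalarTower ℚ_[2] K L] : Ideal (OK K) :=
  Ideal.span (Set.range fun b : Fin (Module.finrank K L) → OK L => Algebra.discr (OK K) b)

/-- `L/K` is a totally ramified quartic extension. -/
def IsTotRamQuartic (L : IntermediateField K (AlgebraicClosure K)) : Prop :=
  Module.finrank K L = 4 ∧
    Ideal.ramificationIdx' (maxIdl (OK K)) (maxIdl (OK L)) = 4

/-- The Galois closure group of `L/K` is isomorphic to `G`. -/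
def GalClosureGrpIso (L : IntermediateField K (AlgebraicClosure K)) (G : Type*) [Group G] : Prop :=
  Nonempty ((↥(normalClosure K L (AlgebraicClosure K)) ≃ₐ[K]
      ↥(normalClosure K L (AlgebraicClosure K))) ≃* G)

variable [FiniteDimensional ℚ_[2] K]

/-- `Σ_m^G`: totally ramified quartic extensions of `K` with discriminant
valuation `m` and Galois closure group `G`, inside a fixed algebraic closure. -/
def SigmaGm (G : Type*) [Group G] (m : ℤ) : Set (IntermediateField K (AlgebraicClosure K)) :=
  {L | IsTotRamQuartic K L ∧ (idealVal (discIdl K L) : ℤ) = m ∧ GalClosureGrpIso K L G}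

/-- `Σ^G`: totally ramified quartic extensions of `K` with Galois closure group `G`. -/
def SigmaG (G : Type*) [Group G] : Set (IntermediateField K (AlgebraicClosure K)) :=
  {L | IsTotRamQuartic K L ∧ GalClosureGrpIso K L G}

/-- The setoid identifying `K`-isomorphic extensions. -/
def extSetoid (S : Set (IntermediateField K (AlgebraicClosure K))) : Setoid S where
  r L L' := Nonempty (↥L.1 ≃ₐ[K] ↥L'.1)
  iseqv := ⟨fun _ => ⟨AlgEquiv.refl⟩, fun ⟨e⟩ => ⟨e.symm⟩, fun ⟨e⟩ ⟨f⟩ => ⟨e.trans f⟩⟩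

/-- The number of isomorphism classes of extensions in `S`. -/
def countClasses (S : Set (IntermediateField K (AlgebraicClosure K))) : ℕ :=
  Nat.card (Quotient (extSetoid K S))

/-- The mass `m̃(S) = ∑_{L ∈ S} (#Aut(L/K))⁻¹ q^{-v_K(d_{L/K})}`, the sum ranging
over isomorphism classes of extensions in `S`. -/
def massOf (S : Set (IntermediateField K (AlgebraicClosure K))) : ℚ :=
  ∑ᶠ c : Quotient (extSetoid K S),
    (Nat.card (↥(Quotient.out c).1 ≃ₐ[K] ↥(Quotient.out c).1) : ℚ)⁻¹ *
      (resCard K : ℚ) ^ (-(idealVal (discIdl K (Quotient.out c).1) : ℤ))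

/-- The field `K(√-1)` inside the algebraic closure. -/
def sqrtNeg1Fld : IntermediateField K (AlgebraicClosure K) :=
  IntermediateField.adjoin K {x : AlgebraicClosure K | x ^ 2 = -1}

/-- `d₍₋₁₎ = v_K(d_{K(√-1)/K})`. -/
def dNeg1 : ℕ := idealVal (discIdl K (sqrtNeg1Fld K))

/-- The indicator function of a proposition. -/
def ind (P : Prop) : ℚ := if P then 1 else 0

end

noncomputable section

/-- The valuation on the algebraic closure of a 2-adic field `K`, normalised so that a
uniformiser of `K` has valuation `1` (and with `v(0) = ⊤`): for algebraic `x` it is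
`e(K/ℚ₂) · v_{ℚ₂}(N(x)) / deg(x)`, computed via the minimal polynomial over `ℚ₂`. -/
def vOmega (K : Type) [Field K] [Algebra ℚ_[2] K] (x : AlgebraicClosure K) : WithTop ℚ :=
  if x = 0 then ⊤
  else (((eRam K : ℚ) * (Padic.valuation ((minpoly ℚ_[2] x).coeff 0) : ℚ) /
      ((minpoly ℚ_[2] x).natDegree : ℚ) : ℚ) : WithTop ℚ)

/-- The normalised valuation `v_K` on a 2-adic field `K`, with `v_K(0) = ⊤`. -/
def vElem (K : Type) [Field K] [Algebra ℚ_[2] K] (x : K) : WithTop ℚ :=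
  vOmega K (algebraMap K (AlgebraicClosure K) x)

end


open Polynomial Module in
set_option maxHeartbeats 1600000 in
set_option synthInstance.maxHeartbeats 400000 in
theorem aux_minpoly_eq (K : Type) [Field K] [Algebra ℚ_[2] K]
    [FiniteDimensional ℚ_[2] K]
    (f : Polynomial (OK K)) (hmon : f.Monic) (hdeg : f.natDegree = 4)
    (r : AlgebraicClosure K)
    (hr : Polynomial.aeval r (f.map (algebraMap (OK K) K)) = 0)
    (hgal12 : 12 ≤ Nat.card ((↥(normalClosure K (↥K⟮r⟯) (AlgebraicClosure K)) ≃ₐ[K]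
      ↥(normalClosure K (↥K⟮r⟯) (AlgebraicClosure K)))))
    (s t : AlgebraicClosure K)
    (hs : Polynomial.aeval s (f.map (algebraMap (OK K) K)) = 0) (hsr : s ≠ r)
    (ht : Polynomial.aeval t (f.map (algebraMap (OK K) K)) = 0) (htr : t ≠ r) :
    minpoly (↥K⟮r⟯) s = minpoly (↥K⟮r⟯) t := by
  haveI : CharZero K := charZero_of_injective_algebraMap (algebraMap ℚ_[2] K).injective
  have hralg : IsIntegral K r := (Algebra.IsAlgebraic.isAlgebraic (R := K) r).isIntegral
  haveI : FiniteDimensional K ↥K⟮r⟯ := IntermediateField.adjoin.finiteDimensional hralg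
  set N := normalClosure K (↥K⟮r⟯) (AlgebraicClosure K) with hNdef
  haveI : IsGalois K ↥N := inferInstance
  set m := minpoly K r with hmdef
  have hm0 : m ≠ 0 := minpoly.ne_zero hralg
  have hmmonic : m.Monic := minpoly.monic hralg
  have hmirr : Irreducible m := minpoly.irreducible hralg
  set p₄ : Polynomial K := f.map (algebraMap (OK K) K) with hp₄def
  have hp₄monic : p₄.Monic := hmon.map _
  have hp₄deg : p₄.natDegree = 4 := by rw [hp₄def, hmon.natDegree_map, hdeg]
  have hmd : m ∣ p₄ := minpoly.dvd K r hr
  have hd4 : m.natDegree ≤ 4 :=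
    hp₄deg ▸ Polynomial.natDegree_le_of_dvd hmd hp₄monic.ne_zero
  have hd1 : 1 ≤ m.natDegree := minpoly.natDegree_pos hralg
  have hN12 : 12 ≤ finrank K ↥N := by
    rw [← IsGalois.card_aut_eq_finrank K ↥N]
    exact hgal12
  -- membership of conjugates in normal intermediate fields
  have roots_mem : ∀ (E : IntermediateField K (AlgebraicClosure K)), Normal K ↥E →
      ∀ x : AlgebraicClosure K, x ∈ E →
      ∀ y : AlgebraicClosure K, Polynomial.aeval y (minpoly K x) = 0 → y ∈ E := by
    intro E hE x hx y hy
    have heq : minpoly K x = minpoly K (⟨x, hx⟩ : ↥E) :=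
      minpoly.algHom_eq E.val Subtype.val_injective ⟨x, hx⟩
    set p := minpoly K (⟨x, hx⟩ : ↥E) with hpdef
    have hxint : IsIntegral K (⟨x, hx⟩ : ↥E) :=
      (isIntegral_algHom_iff E.val Subtype.val_injective).1
        ((Algebra.IsAlgebraic.isAlgebraic (R := K) x).isIntegral)
    have hp0 : p ≠ 0 := minpoly.ne_zero hxint
    have hsp : (p.map (algebraMap K ↥E)).Splits := hE.splits ⟨x, hx⟩
    have hmapmap : p.map (algebraMap K (AlgebraicClosure K)) =
        (p.map (algebraMap K ↥E)).map (algebraMap ↥E (AlgebraicClosure K)) := by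
      rw [Polynomial.map_map, ← IsScalarTower.algebraMap_eq]
    have hroots : (p.map (algebraMap K (AlgebraicClosure K))).roots =
        (p.map (algebraMap K ↥E)).roots.map (algebraMap ↥E (AlgebraicClosure K)) := by
      rw [hmapmap, hsp.roots_map]
    have hy' : y ∈ (p.map (algebraMap K (AlgebraicClosure K))).roots := by
      rw [Polynomial.mem_roots ((minpoly.monic hxint).map _).ne_zero, Polynomial.IsRoot,
        Polynomial.eval_map, ← Polynomial.aeval_def]
      rw [heq] at hy
      exact hy
    rw [hroots] at hy'
    obtain ⟨z, _, hzy⟩ := Multiset.mem_map.1 hy'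
    rw [← hzy]
    exact z.2
  -- N is inside any normal intermediate field containing r
  have hNle : ∀ E : IntermediateField K (AlgebraicClosure K), Normal K ↥E → r ∈ E → N ≤ E := by
    intro E hE hrE
    have hFE : K⟮r⟯ ≤ E := by
      rw [IntermediateField.adjoin_le_iff]
      exact Set.singleton_subset_iff.2 hrE
    refine le_trans (Algebra.IsAlgebraic.normalClosure_le_iSup_adjoin (F := K) (K := ↥K⟮r⟯) (L := AlgebraicClosure K))
      (iSup_le fun x => ?_)
    rw [IntermediateField.adjoin_le_iff]
    intro y hy
    rw [Polynomial.mem_rootSet] at hy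
    have hxE : (x : AlgebraicClosure K) ∈ E := hFE x.2
    have heq : minpoly K x = minpoly K (x : AlgebraicClosure K) :=
      (minpoly.algHom_eq (K⟮r⟯.val) Subtype.val_injective x).symm
    refine roots_mem E hE x hxE y ?_
    rw [← heq]
    exact hy.2
  -- main bound : any interm field containing all roots of m has finrank ≥ 12
  have main : ∀ E : IntermediateField K (AlgebraicClosure K), FiniteDimensional K ↥E →
      m.rootSet (AlgebraicClosure K) ⊆ (E : Set (AlgebraicClosure K)) →
      12 ≤ finrank K ↥E := by
    intro E hfd hsub
    set E₀ := IntermediateField.adjoin K (m.rootSet (AlgebraicClosure K)) with hE₀def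
    haveI hsf := IntermediateField.adjoin_rootSet_isSplittingField
      (K := K) (L := AlgebraicClosure K) (p := m) (IsAlgClosed.splits _)
    haveI hnorm : Normal K ↥E₀ := Normal.of_isSplittingField m
    have hrE₀ : r ∈ E₀ := IntermediateField.subset_adjoin _ _
      (by rw [Polynomial.mem_rootSet]; exact ⟨hm0, minpoly.aeval K r⟩)
    have h3 : N ≤ E := le_trans (hNle E₀ hnorm hrE₀) ((IntermediateField.adjoin_le_iff).2 hsub)
    refine le_trans hN12 ?_
    exact LinearMap.finrank_le_finrank_of_injective
      (f := (IntermediateField.inclusion h3).toLinearMap)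
      (IntermediateField.inclusion_injective h3)
  -- roots multiset
  set P : Polynomial (AlgebraicClosure K) := m.map (algebraMap K (AlgebraicClosure K)) with hPdef
  have hPsplits : P.Splits :=
    IsAlgClosed.splits P
  have hP0 : P ≠ 0 := (hmmonic.map _).ne_zero
  have hPcard : Multiset.card P.roots = m.natDegree := by
    rw [(Polynomial.splits_iff_card_roots).1 hPsplits]
    exact Polynomial.natDegree_map_eq_of_injective (algebraMap K (AlgebraicClosure K)).injective m
  have hPsum : P.roots.sum = algebraMap K (AlgebraicClosure K) (-(m.nextCoeff)) := by
    have h := hPsplits.nextCoeff_eq_neg_sum_roots_of_monic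
      (hmmonic.map (algebraMap K (AlgebraicClosure K)))
    rw [Polynomial.nextCoeff_map (algebraMap K (AlgebraicClosure K)).injective] at h
    rw [map_neg, h, neg_neg]
  have hmem_roots : ∀ x : AlgebraicClosure K, Polynomial.aeval x m = 0 → x ∈ P.roots := by
    intro x hx
    rw [Polynomial.mem_roots hP0, Polynomial.IsRoot, Polynomial.eval_map, ← Polynomial.aeval_def]
    exact hx
  have hroots_sub : m.rootSet (AlgebraicClosure K) ⊆ {x : AlgebraicClosure K | x ∈ P.roots} := by
    intro x hx
    rw [Polynomial.mem_rootSet] at hx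
    exact hmem_roots x hx.2
  -- rule out degree ≤ 3
  have hint : ∀ x : AlgebraicClosure K, IsIntegral K x :=
    fun x => (Algebra.IsAlgebraic.isAlgebraic (R := K) x).isIntegral
  have minpoly_root_eq : ∀ x : AlgebraicClosure K, x ∈ P.roots → minpoly K x = m := by
    intro x hx
    rw [Polynomial.mem_roots hP0, Polynomial.IsRoot, Polynomial.eval_map,
      ← Polynomial.aeval_def] at hx
    exact (minpoly.eq_of_irreducible_of_monic hmirr hx hmmonic).symm
  have hdeg4 : m.natDegree = 4 := by
    by_contra hne
    have hcases : Multiset.card P.roots = 1 ∨ Multiset.card P.roots = 2 ∨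
        Multiset.card P.roots = 3 := by omega
    rcases hcases with h1 | h2 | h3
    · -- degree 1
      obtain ⟨a, ha⟩ := Multiset.card_eq_one.1 h1
      have haR : a ∈ P.roots := by rw [ha]; exact Multiset.mem_singleton_self a
      haveI : FiniteDimensional K ↥K⟮a⟯ := IntermediateField.adjoin.finiteDimensional (hint a)
      have h12 := main K⟮a⟯ inferInstance ?_
      · rw [IntermediateField.adjoin.finrank (hint a), minpoly_root_eq a haR] at h12
        omega
      · intro x hx
        have : x ∈ P.roots := hroots_sub hx
        rw [ha, Multiset.mem_singleton] at this
        rw [this]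
        exact IntermediateField.mem_adjoin_simple_self K a
    · -- degree 2
      obtain ⟨a, b, hab⟩ := Multiset.card_eq_two.1 h2
      have haR : a ∈ P.roots := by rw [hab]; simp
      haveI : FiniteDimensional K ↥K⟮a⟯ := IntermediateField.adjoin.finiteDimensional (hint a)
      have hbval : b = algebraMap K (AlgebraicClosure K) (-(m.nextCoeff)) - a := by
        rw [hab] at hPsum
        simp only [Multiset.insert_eq_cons, Multiset.sum_cons, Multiset.sum_singleton] at hPsum
        linear_combination hPsum
      have h12 := main K⟮a⟯ inferInstance ?_
      · rw [IntermediateField.adjoin.finrank (hint a), minpoly_root_eq a haR] at h12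
        omega
      · intro x hx
        have hx' : x ∈ P.roots := hroots_sub hx
        rw [hab] at hx'
        simp only [Multiset.insert_eq_cons, Multiset.mem_cons, Multiset.mem_singleton] at hx'
        rcases hx' with h | h
        · rw [h]; exact IntermediateField.mem_adjoin_simple_self K a
        · rw [h, hbval]
          exact sub_mem (IntermediateField.algebraMap_mem _ _)
            (IntermediateField.mem_adjoin_simple_self K a)
    · -- degree 3
      obtain ⟨a, b, c, habc⟩ := Multiset.card_eq_three.1 h3
      have haR : a ∈ P.roots := by rw [habc]; simp
      have hbint : IsIntegral (↥K⟮a⟯) b := IsIntegral.tower_top (hint b)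
      haveI : FiniteDimensional K ↥K⟮a⟯ := IntermediateField.adjoin.finiteDimensional (hint a)
      haveI : FiniteDimensional (↥K⟮a⟯) ↥(IntermediateField.adjoin (↥K⟮a⟯) {b}) :=
        IntermediateField.adjoin.finiteDimensional hbint
      haveI hfdKE : FiniteDimensional K ↥(IntermediateField.adjoin (↥K⟮a⟯) {b}) :=
        FiniteDimensional.trans K (↥K⟮a⟯) ↥(IntermediateField.adjoin (↥K⟮a⟯) {b})
      set E := IntermediateField.restrictScalars K (IntermediateField.adjoin (↥K⟮a⟯) {b})
        with hEdef
      have haE : a ∈ E := by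
        rw [IntermediateField.mem_restrictScalars]
        have : a = algebraMap (↥K⟮a⟯) (AlgebraicClosure K)
            ⟨a, IntermediateField.mem_adjoin_simple_self K a⟩ := rfl
        rw [this]
        exact IntermediateField.algebraMap_mem _ _
      have hbE : b ∈ E := by
        rw [IntermediateField.mem_restrictScalars]
        exact IntermediateField.subset_adjoin _ _ (Set.mem_singleton b)
      have hKE : ∀ y : K, algebraMap K (AlgebraicClosure K) y ∈ E := by
        intro y
        rw [IntermediateField.mem_restrictScalars,
          IsScalarTower.algebraMap_apply K (↥K⟮a⟯) (AlgebraicClosure K)]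
        exact IntermediateField.algebraMap_mem _ _
      have hcval : c = algebraMap K (AlgebraicClosure K) (-(m.nextCoeff)) - a - b := by
        rw [habc] at hPsum
        simp only [Multiset.insert_eq_cons, Multiset.sum_cons, Multiset.sum_singleton] at hPsum
        linear_combination hPsum
      have h12 := main E hfdKE ?_
      · have hfr : finrank K ↥E =
            finrank K (↥K⟮a⟯) * finrank (↥K⟮a⟯) ↥(IntermediateField.adjoin (↥K⟮a⟯) {b}) :=
          (Module.finrank_mul_finrank K (↥K⟮a⟯) ↥(IntermediateField.adjoin (↥K⟮a⟯) {b})).symm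
        have hb3 : finrank (↥K⟮a⟯) ↥(IntermediateField.adjoin (↥K⟮a⟯) {b}) ≤ 3 := by
          rw [IntermediateField.adjoin.finrank hbint]
          have hdvd : minpoly (↥K⟮a⟯) b ∣ m.map (algebraMap K (↥K⟮a⟯)) := by
            refine minpoly.dvd _ b ?_
            rw [Polynomial.aeval_map_algebraMap]
            have : b ∈ P.roots := by rw [habc]; simp
            rw [Polynomial.mem_roots hP0, Polynomial.IsRoot, Polynomial.eval_map,
              ← Polynomial.aeval_def] at this
            exact this
          have := Polynomial.natDegree_le_of_dvd hdvd (hmmonic.map _).ne_zero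
          rwa [hmmonic.natDegree_map, ← hPcard, h3] at this
        have ha3 : finrank K (↥K⟮a⟯) = 3 := by
          rw [IntermediateField.adjoin.finrank (hint a), minpoly_root_eq a haR, ← hPcard, h3]
        rw [hfr, ha3] at h12
        omega
      · intro x hx
        have hx' : x ∈ P.roots := hroots_sub hx
        rw [habc] at hx'
        simp only [Multiset.insert_eq_cons, Multiset.mem_cons, Multiset.mem_singleton] at hx'
        rcases hx' with h | h | h
        · rw [h]; exact haE
        · rw [h]; exact hbE
        · rw [h, hcval]
          exact sub_mem (sub_mem (hKE _) haE) hbE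
  -- now m = p₄
  have hmp₄ : m = p₄ := by
    obtain ⟨c, hc⟩ := hmd
    have hc0 : c ≠ 0 := by
      intro h; rw [h, mul_zero] at hc; exact hp₄monic.ne_zero hc
    have hdc : c.natDegree = 0 := by
      have hnn := Polynomial.natDegree_mul hm0 hc0
      rw [← hc, hp₄deg, hdeg4] at hnn
      omega
    have hcmon : c.Monic := by
      have h2 := hp₄monic
      rw [hc] at h2
      have h3 := Polynomial.leadingCoeff_mul m c
      rw [Polynomial.Monic.def.1 h2, Polynomial.Monic.def.1 hmmonic, one_mul] at h3
      exact h3.symm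
    have : c = 1 := Polynomial.Monic.natDegree_eq_zero hcmon |>.1 hdc
    rw [hc, this, mul_one]
  have hs' : Polynomial.aeval s m = 0 := by rw [hmp₄]; exact hs
  have ht' : Polynomial.aeval t m = 0 := by rw [hmp₄]; exact ht
  by_cases hst : s = t
  · rw [hst]
  -- the auxiliary contradiction
  have aux : ∀ s' t' : AlgebraicClosure K, Polynomial.aeval s' m = 0 → s' ≠ r →
      Polynomial.aeval t' m = 0 → t' ≠ r → s' ≠ t' →
      (minpoly (↥K⟮r⟯) s').natDegree = 1 → (minpoly (↥K⟮r⟯) t').natDegree ≤ 2 → False := by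
    intro s' t' hsm hsr' htm htr' hst' hds hdt
    have hs'int : IsIntegral (↥K⟮r⟯) s' := IsIntegral.tower_top (hint s')
    have ht'int : IsIntegral (↥K⟮r⟯) t' := IsIntegral.tower_top (hint t')
    have hps : minpoly (↥K⟮r⟯) s' =
        Polynomial.X + Polynomial.C ((minpoly (↥K⟮r⟯) s').coeff 0) :=
      (minpoly.monic hs'int).eq_X_add_C hds
    have hsF : s' ∈ K⟮r⟯ := by
      have h0 := minpoly.aeval (↥K⟮r⟯) s'
      rw [hps] at h0
      simp only [map_add, Polynomial.aeval_X, Polynomial.aeval_C] at h0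
      have hs'eq : s' =
          algebraMap (↥K⟮r⟯) (AlgebraicClosure K) (-((minpoly (↥K⟮r⟯) s').coeff 0)) := by
        rw [map_neg]
        linear_combination h0
      rw [hs'eq]
      exact ((-((minpoly (↥K⟮r⟯) s').coeff 0) : ↥K⟮r⟯)).2
    have hsep : P.Separable := hmirr.separable.map
    have hnodup : P.roots.Nodup := Polynomial.nodup_roots hsep
    have hsub3 : ({r, s', t'} : Multiset (AlgebraicClosure K)) ≤ P.roots := by
      rw [Multiset.le_iff_subset]
      · intro x hx
        simp only [Multiset.insert_eq_cons, Multiset.mem_cons, Multiset.mem_singleton] at hx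
        rcases hx with h | h | h
        · rw [h]; exact hmem_roots r (minpoly.aeval K r)
        · rw [h]; exact hmem_roots s' hsm
        · rw [h]; exact hmem_roots t' htm
      · simp only [Multiset.insert_eq_cons, Multiset.nodup_cons, Multiset.mem_cons,
          Multiset.mem_singleton, Multiset.nodup_singleton, and_true]
        exact ⟨by push_neg; exact ⟨fun h => hsr' h.symm, fun h => htr' h.symm⟩, hst'⟩
    obtain ⟨w, hw⟩ := Multiset.le_iff_exists_add.1 hsub3
    have hwcard : Multiset.card w = 1 := by
      have h5 := hPcard
      rw [hw, Multiset.card_add, hdeg4] at h5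
      simp only [Multiset.insert_eq_cons, Multiset.card_cons, Multiset.card_singleton] at h5
      omega
    obtain ⟨u, hu⟩ := Multiset.card_eq_one.1 hwcard
    have husum : r + s' + t' + u = algebraMap K (AlgebraicClosure K) (-(m.nextCoeff)) := by
      rw [hw, hu] at hPsum
      simp only [Multiset.insert_eq_cons, Multiset.sum_add, Multiset.sum_cons,
        Multiset.sum_singleton] at hPsum
      linear_combination hPsum
    set E'' := IntermediateField.adjoin (↥K⟮r⟯) {t'} with hE''def
    haveI : FiniteDimensional (↥K⟮r⟯) ↥E'' := IntermediateField.adjoin.finiteDimensional ht'int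
    haveI hfdE : FiniteDimensional K ↥E'' := FiniteDimensional.trans K (↥K⟮r⟯) ↥E''
    set E := IntermediateField.restrictScalars K E'' with hEdef
    have hFE : ∀ z : ↥K⟮r⟯, (z : AlgebraicClosure K) ∈ E := by
      intro z
      rw [IntermediateField.mem_restrictScalars]
      have hza : (z : AlgebraicClosure K) = algebraMap (↥K⟮r⟯) (AlgebraicClosure K) z := rfl
      rw [hza]
      exact IntermediateField.algebraMap_mem _ _
    have hrE : r ∈ E := hFE ⟨r, IntermediateField.mem_adjoin_simple_self K r⟩
    have hsE : s' ∈ E := hFE ⟨s', hsF⟩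
    have htE : t' ∈ E := by
      rw [IntermediateField.mem_restrictScalars]
      exact IntermediateField.subset_adjoin _ _ (Set.mem_singleton t')
    have hKE : ∀ y : K, algebraMap K (AlgebraicClosure K) y ∈ E := by
      intro y
      exact hFE ⟨algebraMap K _ y, IntermediateField.algebraMap_mem _ y⟩
    have huE : u ∈ E := by
      have hueq : u = algebraMap K (AlgebraicClosure K) (-(m.nextCoeff)) - r - s' - t' := by
        linear_combination husum
      rw [hueq]
      exact sub_mem (sub_mem (sub_mem (hKE _) hrE) hsE) htE
    have h12 := main E hfdE ?_
    · have hfr : finrank K ↥E = finrank K (↥K⟮r⟯) * finrank (↥K⟮r⟯) ↥E'' :=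
        (Module.finrank_mul_finrank K (↥K⟮r⟯) ↥E'').symm
      have h4 : finrank K (↥K⟮r⟯) = 4 := by
        rw [IntermediateField.adjoin.finrank hralg, ← hmdef, hdeg4]
      have hqb : finrank (↥K⟮r⟯) ↥E'' ≤ 2 := by
        rw [IntermediateField.adjoin.finrank ht'int]
        exact hdt
      rw [hfr, h4] at h12
      omega
    · intro x hx
      have hx' : x ∈ P.roots := hroots_sub hx
      rw [hw, hu] at hx'
      simp only [Multiset.insert_eq_cons, Multiset.mem_add, Multiset.mem_cons,
        Multiset.mem_singleton] at hx'
      rcases hx' with (h | h | h) | h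
      · rw [h]; exact hrE
      · rw [h]; exact hsE
      · rw [h]; exact htE
      · rw [h]; exact huE
  by_contra hpq
  have hsint : IsIntegral (↥K⟮r⟯) s := IsIntegral.tower_top (hint s)
  have htint : IsIntegral (↥K⟮r⟯) t := IsIntegral.tower_top (hint t)
  set rF : ↥K⟮r⟯ := IntermediateField.AdjoinSimple.gen K r with hrFdef
  set M : Polynomial (↥K⟮r⟯) := m.map (algebraMap K (↥K⟮r⟯)) with hMdef
  have hMr : Polynomial.IsRoot M rF := by
    rw [Polynomial.IsRoot, Polynomial.eval_map, ← Polynomial.aeval_def]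
    have h0 : algebraMap (↥K⟮r⟯) (AlgebraicClosure K) (Polynomial.aeval rF m) = 0 := by
      rw [← Polynomial.aeval_algebraMap_apply, IntermediateField.AdjoinSimple.algebraMap_gen]
      exact minpoly.aeval K r
    have := (algebraMap (↥K⟮r⟯) (AlgebraicClosure K)).injective
      (h0.trans (map_zero (algebraMap (↥K⟮r⟯) (AlgebraicClosure K))).symm)
    exact this
  set g := M /ₘ (Polynomial.X - Polynomial.C rF) with hgdef
  have hfac : (Polynomial.X - Polynomial.C rF) * g = M :=
    (Polynomial.mul_divByMonic_eq_iff_isRoot).2 hMr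
  have hM0 : M ≠ 0 := (hmmonic.map _).ne_zero
  have hMdeg : M.natDegree = 4 := by rw [hMdef, hmmonic.natDegree_map, hdeg4]
  have hg0 : g ≠ 0 := by
    intro h
    rw [h, mul_zero] at hfac
    exact hM0 hfac.symm
  have hgdeg : g.natDegree = 3 := by
    have h6 := Polynomial.natDegree_mul (Polynomial.X_sub_C_ne_zero rF) hg0
    rw [hfac, Polynomial.natDegree_X_sub_C, hMdeg] at h6
    omega
  have hdvdM : ∀ x : AlgebraicClosure K, Polynomial.aeval x m = 0 → x ≠ r →
      minpoly (↥K⟮r⟯) x ∣ g := by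
    intro x hxm hxr
    have hdM : minpoly (↥K⟮r⟯) x ∣ M := by
      refine minpoly.dvd _ x ?_
      rw [hMdef, Polynomial.aeval_map_algebraMap]
      exact hxm
    rw [← hfac] at hdM
    have hprime : Prime (minpoly (↥K⟮r⟯) x) :=
      (minpoly.irreducible (IsIntegral.tower_top (hint x))).prime
    rcases hprime.2.2 _ _ hdM with hleft | hright
    · exfalso
      obtain ⟨h, hh⟩ := hleft
      have h0 : Polynomial.aeval x (Polynomial.X - Polynomial.C rF : Polynomial (↥K⟮r⟯)) = 0 := by
        rw [hh, map_mul, minpoly.aeval, zero_mul]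
      simp only [map_sub, Polynomial.aeval_X, Polynomial.aeval_C,
        IntermediateField.AdjoinSimple.algebraMap_gen] at h0
      exact hxr (sub_eq_zero.1 h0)
    · exact hright
  have hpdvd := hdvdM s hs' hsr
  have hqdvd := hdvdM t ht' htr
  obtain ⟨h1, hh1⟩ := hpdvd
  have hqprime : Prime (minpoly (↥K⟮r⟯) t) := (minpoly.irreducible htint).prime
  have hqd1 : minpoly (↥K⟮r⟯) t ∣ h1 := by
    rcases hqprime.2.2 _ _ (hh1 ▸ hqdvd) with hl | hr
    · exfalso
      exact hpq (Polynomial.eq_of_monic_of_associated (minpoly.monic hsint)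
        (minpoly.monic htint)
        ((minpoly.irreducible htint).associated_of_dvd (minpoly.irreducible hsint) hl).symm)
    · exact hr
  obtain ⟨h2, hh2⟩ := hqd1
  have hh20 : h2 ≠ 0 := by
    intro h
    rw [h, mul_zero] at hh2
    rw [hh2, mul_zero] at hh1
    exact hg0 hh1
  have hsumdeg : (minpoly (↥K⟮r⟯) s).natDegree + (minpoly (↥K⟮r⟯) t).natDegree ≤ 3 := by
    have hp0' : minpoly (↥K⟮r⟯) s ≠ 0 := minpoly.ne_zero hsint
    have hq0' : minpoly (↥K⟮r⟯) t ≠ 0 := minpoly.ne_zero htint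
    have hgg : g = minpoly (↥K⟮r⟯) s * (minpoly (↥K⟮r⟯) t * h2) := by rw [← hh2, ← hh1]
    have hd1' := Polynomial.natDegree_mul hp0' (mul_ne_zero hq0' hh20)
    have hd2' := Polynomial.natDegree_mul hq0' hh20
    rw [← hgg, hgdeg] at hd1'
    omega
  have hp1 : 1 ≤ (minpoly (↥K⟮r⟯) s).natDegree := minpoly.natDegree_pos hsint
  have hq1 : 1 ≤ (minpoly (↥K⟮r⟯) t).natDegree := minpoly.natDegree_pos htint
  by_cases hp1' : (minpoly (↥K⟮r⟯) s).natDegree = 1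
  · exact aux s t hs' hsr ht' htr hst hp1' (by omega)
  · have hq1' : (minpoly (↥K⟮r⟯) t).natDegree = 1 := by omega
    exact aux t s ht' htr hs' hsr (Ne.symm hst) hq1' (by omega)

/-- Lemma 2.3 (Monnet): if `f` is a monic quartic Eisenstein polynomial over `𝒪_K` whose
root field has Galois closure group `S₄` or `A₄`, then the valuations of the differences
of the conjugates of a root `r` with `r` itself are all equal. -/
theorem lem_1_aut_implies_eq_vals (K : Type) [Field K] [Algebra ℚ_[2] K]
    [FiniteDimensional ℚ_[2] K]
    (f : Polynomial (OK K)) (hmon : f.Monic) (hdeg : f.natDegree = 4)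
    (heis : f.IsEisensteinAt (maxIdl (OK K)))
    (r : AlgebraicClosure K)
    (hr : Polynomial.aeval r (f.map (algebraMap (OK K) K)) = 0)
    (hgal : GalClosureGrpIso K K⟮r⟯ (Equiv.Perm (Fin 4)) ∨
      GalClosureGrpIso K K⟮r⟯ ↥(alternatingGroup (Fin 4)))
    (s t : AlgebraicClosure K)
    (hs : Polynomial.aeval s (f.map (algebraMap (OK K) K)) = 0) (hsr : s ≠ r)
    (ht : Polynomial.aeval t (f.map (algebraMap (OK K) K)) = 0) (htr : t ≠ r) :
    vOmega K (s - r) = vOmega K (t - r) := by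
  haveI : CharZero K := charZero_of_injective_algebraMap (algebraMap ℚ_[2] K).injective
  have hgal12 : 12 ≤ Nat.card ((↥(normalClosure K (↥K⟮r⟯) (AlgebraicClosure K)) ≃ₐ[K]
      ↥(normalClosure K (↥K⟮r⟯) (AlgebraicClosure K)))) := by
    rcases hgal with h | h
    · obtain ⟨e⟩ := h
      rw [Nat.card_congr e.toEquiv, Nat.card_eq_fintype_card, Fintype.card_perm]
      norm_num [Nat.factorial]
    · obtain ⟨e⟩ := h
      rw [Nat.card_congr e.toEquiv]
      have h24 : 2 * Nat.card ↥(alternatingGroup (Fin 4)) = 24 := by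
        rw [Nat.card_eq_fintype_card, two_mul_card_alternatingGroup, Fintype.card_perm]
        norm_num [Nat.factorial]
      omega
  have hmin := aux_minpoly_eq K f hmon hdeg r hr hgal12 s t hs hsr ht htr
  haveI : IsAlgClosure (↥K⟮r⟯) (AlgebraicClosure K) :=
    ⟨inferInstance, Algebra.IsAlgebraic.tower_top (K := K) (↥K⟮r⟯)⟩
  haveI : Normal (↥K⟮r⟯) (AlgebraicClosure K) := inferInstance
  obtain ⟨σ, hσ⟩ := IsConjRoot.exists_algEquiv (isConjRoot_def.mpr hmin)
  have hσr : σ r = r := by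
    have h1 := σ.commutes (IntermediateField.AdjoinSimple.gen K r)
    rwa [IntermediateField.AdjoinSimple.algebraMap_gen] at h1
  have hst : σ (t - r) = s - r := by rw [map_sub, hσ, hσr]
  have hmp : minpoly ℚ_[2] (s - r) = minpoly ℚ_[2] (t - r) := by
    rw [← hst]
    exact minpoly.algEquiv_eq ((σ.restrictScalars K).restrictScalars ℚ_[2]) (t - r)
  have h1 : s - r ≠ 0 := sub_ne_zero.mpr hsr
  have h2 : t - r ≠ 0 := sub_ne_zero.mpr htr
  simp only [vOmega, if_neg h1, if_neg h2, hmp]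
end

section
/- Let E = K(√d) for d ∈ K^× \ K^{×2} and let L = E(√α) for α ∈ E^× \ E^{×2}. Then the Galois closure group of L/K is isomorphic to V₄ if N_{E/K}(α) ∈ K^{×2}; isomorphic to C₄ if N_{E/K}(α) ∈ d·K^{×2}; and isomorphic to D₄ otherwise. -/
open scoped Classical
set_option synthInstance.maxHeartbeats 1000000
set_option maxHeartbeats 1000000
open IntermediateField

section GroupLemmas
variable {G : Type*} [Group G]

lemma my_pow_val_add {g : G} {n : ℕ} (hg : g ^ n = 1) [NeZero n] (i j : ZMod n) :
    g ^ (i + j).val = g ^ i.val * g ^ j.val := by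
  rw [← pow_add, pow_eq_pow_iff_modEq, ZMod.val_add]
  exact Nat.ModEq.of_dvd (orderOf_dvd_of_pow_eq_one hg) (Nat.mod_modEq _ n)

lemma GL2 (h4 : Nat.card G = 4) (g : G) (hg : g ^ 2 ≠ 1) :
    Nonempty (G ≃* Multiplicative (ZMod 4)) := by
  have hfin : Finite G := Nat.finite_of_card_ne_zero (by omega)
  have hg4 : g ^ 4 = 1 := by
    have := orderOf_dvd_natCard g
    rw [h4] at this
    rw [← h4]
    exact pow_card_eq_one'
  have hord : orderOf g = 4 := by
    have := orderOf_eq_prime_pow (p := 2) (n := 1) (x := g) (by simpa using hg) (by simpa using hg4)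
    simpa using this
  let f : Multiplicative (ZMod 4) →* G :=
    { toFun := fun i => g ^ (i.toAdd).val
      map_one' := by simp [ZMod.val_zero]
      map_mul' := fun i j => my_pow_val_add hg4 _ _ }
  have hinj : Function.Injective f := by
    rw [injective_iff_map_eq_one]
    intro a ha
    have : g ^ (a.toAdd).val = 1 := ha
    rw [pow_eq_one_iff_modEq, Nat.modEq_zero_iff_dvd, hord] at this
    have hlt : (a.toAdd).val < 4 := ZMod.val_lt _
    have : (a.toAdd).val = 0 := by omega
    have : a.toAdd = 0 := by
      rwa [ZMod.val_eq_zero] at this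
    exact this
  have hbij : Function.Bijective f :=
    (Nat.bijective_iff_injective_and_card f).mpr ⟨hinj, by simp [h4]⟩
  exact ⟨(MulEquiv.ofBijective f hbij).symm⟩

lemma GL1 (h4 : Nat.card G = 4) (hexp : ∀ g : G, g ^ 2 = 1) :
    Nonempty (G ≃* Multiplicative (ZMod 2 × ZMod 2)) := by
  have hfin : Finite G := Nat.finite_of_card_ne_zero (by omega)
  have hinv : ∀ g : G, g⁻¹ = g := fun g =>
    inv_eq_of_mul_eq_one_right (by rw [← pow_two]; exact hexp g)
  have hcomm : ∀ a b : G, a * b = b * a := by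
    intro a b
    calc a * b = (a * b)⁻¹ := (hinv _).symm
    _ = b⁻¹ * a⁻¹ := mul_inv_rev a b
    _ = b * a := by rw [hinv, hinv]
  have : Fintype G := Fintype.ofFinite G
  have hcard : Fintype.card G = 4 := by rw [← Nat.card_eq_fintype_card, h4]
  obtain ⟨a, ha⟩ : ∃ a : G, a ≠ 1 := by
    by_contra h
    push_neg at h
    have : Fintype.card G ≤ 1 := Fintype.card_le_one_iff.mpr (fun x y => by rw [h x, h y])
    omega
  obtain ⟨b, hb1, hba⟩ : ∃ b : G, b ≠ 1 ∧ b ≠ a := by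
    classical
    by_contra h
    push_neg at h
    have hsub : (Finset.univ : Finset G) ⊆ ({1, a} : Finset G) := by
      intro x _
      rcases eq_or_ne x 1 with hx | hx
      · simp [hx]
      · simp [h x hx]
    have h5 := Finset.card_le_card hsub
    have h6 : ({1, a} : Finset G).card ≤ 2 := Finset.card_insert_le _ _ |>.trans (by simp)
    simp only [Finset.card_univ, hcard] at h5
    omega
  let f : Multiplicative (ZMod 2 × ZMod 2) →* G :=
    { toFun := fun p => a ^ (p.toAdd.1).val * b ^ (p.toAdd.2).val
      map_one' := by simp [ZMod.val_zero]
      map_mul' := fun p q => by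
        show a ^ (p.toAdd.1 + q.toAdd.1).val * b ^ (p.toAdd.2 + q.toAdd.2).val = _
        rw [my_pow_val_add (hexp a), my_pow_val_add (hexp b)]
        rw [mul_assoc, mul_assoc]
        congr 1
        rw [← mul_assoc, ← mul_assoc, hcomm (b ^ (p.toAdd.2).val) (a ^ (q.toAdd.1).val)] }
  have hinj : Function.Injective f := by
    rw [injective_iff_map_eq_one]
    intro p hp
    have hp' : a ^ (p.toAdd.1).val * b ^ (p.toAdd.2).val = 1 := hp
    have h1 : (p.toAdd.1).val < 2 := ZMod.val_lt _
    have h2 : (p.toAdd.2).val < 2 := ZMod.val_lt _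
    have hu : (p.toAdd.1).val = 0 ∨ (p.toAdd.1).val = 1 := by omega
    have hv : (p.toAdd.2).val = 0 ∨ (p.toAdd.2).val = 1 := by omega
    have key : (p.toAdd.1).val = 0 ∧ (p.toAdd.2).val = 0 := by
      rcases hu with hu | hu <;> rcases hv with hv | hv
      · exact ⟨hu, hv⟩
      · rw [hu, hv, pow_zero, pow_one, one_mul] at hp'; exact absurd hp' hb1
      · rw [hu, hv, pow_zero, pow_one, mul_one] at hp'; exact absurd hp' ha
      · exfalso
        rw [hu, hv, pow_one, pow_one] at hp'
        apply hba
        rw [mul_eq_one_iff_eq_inv, hinv] at hp'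
        exact hp'.symm
    obtain ⟨k1, k2⟩ := key
    have e1 : p.toAdd.1 = 0 := by rwa [ZMod.val_eq_zero] at k1
    have e2 : p.toAdd.2 = 0 := by rwa [ZMod.val_eq_zero] at k2
    show p.toAdd = 0
    exact Prod.ext e1 e2
  have hbij : Function.Bijective f :=
    (Nat.bijective_iff_injective_and_card f).mpr
      ⟨hinj, by simp [Nat.card_eq_fintype_card, hcard]⟩
  exact ⟨(MulEquiv.ofBijective f hbij).symm⟩

lemma GL3 (h8 : Nat.card G = 8) (r s : G) (hr4 : r ^ 4 = 1) (hr2 : r ^ 2 ≠ 1)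
    (hs2 : s ^ 2 = 1) (hrs : (r * s) ^ 2 = 1) (h1 : s ≠ 1) (h2 : s ≠ r) (h3 : s ≠ r ^ 2)
    (h4 : s ≠ r ^ 3) : Nonempty (G ≃* DihedralGroup 4) := by
  have hfin : Finite G := Nat.finite_of_card_ne_zero (by omega)
  have horder : orderOf r = 4 := by
    have := orderOf_eq_prime_pow (p := 2) (n := 1) (x := r) (by simpa using hr2)
      (by simpa using hr4)
    simpa using this
  have hsinv : s⁻¹ = s := inv_eq_of_mul_eq_one_right (by rw [← pow_two]; exact hs2)
  have hsr : r * s = s * r⁻¹ := by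
    have h := hrs
    rw [pow_two] at h
    have : r * s = (r * s)⁻¹ := eq_inv_of_mul_eq_one_right h
    rw [this, mul_inv_rev, hsinv]
  have key : ∀ n : ℕ, r ^ n * s = s * (r ^ n)⁻¹ := by
    intro n
    induction n with
    | zero => simp
    | succ n ih =>
      calc r ^ (n + 1) * s = r * (r ^ n * s) := by rw [pow_succ']; group
      _ = r * s * (r ^ n)⁻¹ := by rw [ih, mul_assoc]
      _ = s * r⁻¹ * (r ^ n)⁻¹ := by rw [hsr]
      _ = s * (r ^ (n + 1))⁻¹ := by rw [pow_succ, mul_inv_rev]; group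
  set pw : ZMod 4 → G := fun i => r ^ i.val with hpw
  have pw_add : ∀ i j : ZMod 4, pw (i + j) = pw i * pw j := fun i j => my_pow_val_add hr4 i j
  have pw_zero : pw 0 = 1 := by simp [hpw, ZMod.val_zero]
  have pw_neg : ∀ i : ZMod 4, pw (-i) = (pw i)⁻¹ := by
    intro i
    have : pw i * pw (-i) = 1 := by rw [← pw_add]; simp [pw_zero]
    exact (inv_eq_of_mul_eq_one_right this).symm
  have pw_comm : ∀ i j : ZMod 4, pw i * pw j = pw j * pw i := fun i j =>
    ((Commute.refl r).pow_pow i.val j.val).eq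
  have key' : ∀ i : ZMod 4, pw i * s = s * pw (-i) := by
    intro i
    rw [pw_neg]
    exact key i.val
  let f : DihedralGroup 4 →* G :=
    { toFun := fun g => match g with
        | .r i => pw i
        | .sr i => s * pw i
      map_one' := by show pw 0 = 1; exact pw_zero
      map_mul' := by
        rintro (i | i) (j | j)
        · show pw (i + j) = pw i * pw j
          exact pw_add i j
        · show s * pw (j - i) = pw i * (s * pw j)
          rw [← mul_assoc, key', mul_assoc, ← pw_add]
          ring_nf
        · show s * pw (i + j) = (s * pw i) * pw j
          rw [mul_assoc, pw_add]
        · show pw (j - i) = (s * pw i) * (s * pw j)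
          rw [mul_assoc, ← mul_assoc (pw i), key', ← mul_assoc, ← mul_assoc,
            ← pow_two, hs2, one_mul, ← pw_add]
          ring_nf }
  have hinj : Function.Injective f := by
    rw [injective_iff_map_eq_one]
    rintro (i | i) hp
    · have hp' : pw i = 1 := hp
      rw [hpw] at hp'
      simp only at hp'
      rw [pow_eq_one_iff_modEq, Nat.modEq_zero_iff_dvd, horder] at hp'
      have hlt : i.val < 4 := ZMod.val_lt _
      have : i.val = 0 := by omega
      have : i = 0 := by rwa [ZMod.val_eq_zero] at this
      rw [this]
      rfl
    · exfalso
      have hp' : s * pw i = 1 := hp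
      have hs' : s = pw (-i) := by
        rw [pw_neg]
        exact eq_inv_of_mul_eq_one_left hp'
      have hlt : (-i).val < 4 := ZMod.val_lt _
      have : (-i).val = 0 ∨ (-i).val = 1 ∨ (-i).val = 2 ∨ (-i).val = 3 := by omega
      rcases this with h | h | h | h <;> rw [hpw] at hs' <;> simp only [h] at hs'
      · rw [pow_zero] at hs'; exact h1 hs'
      · rw [pow_one] at hs'; exact h2 hs'
      · exact h3 hs'
      · exact h4 hs'
  have hbij : Function.Bijective f :=
    (Nat.bijective_iff_injective_and_card f).mpr
      ⟨hinj, by rw [Nat.card_eq_fintype_card, DihedralGroup.card, h8]⟩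
  exact ⟨(MulEquiv.ofBijective f hbij).symm⟩

end GroupLemmas


open IntermediateField Polynomial

section Quad

variable {k Ω : Type*} [Field k] [Field Ω] [Algebra k Ω]

lemma sq_eq_sq_field {a b : Ω} (h : a ^ 2 = b ^ 2) : a = b ∨ a = -b := by
  have h0 : (a - b) * (a + b) = 0 := by linear_combination h
  rcases mul_eq_zero.mp h0 with h' | h'
  · left; exact sub_eq_zero.mp h'
  · right; linear_combination h'

variable {c : k} {z : Ω}

/-- The subalgebra `k + k z` when `z ^ 2 ∈ k`. -/
def quadSub (hz : z ^ 2 = algebraMap k Ω c) : Subalgebra k Ω where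
  carrier := {w | ∃ a b : k, w = algebraMap k Ω a + algebraMap k Ω b * z}
  mul_mem' := by
    rintro u v ⟨a, b, rfl⟩ ⟨a', b', rfl⟩
    exact ⟨a * a' + b * b' * c, a * b' + a' * b, by
      simp only [map_add, map_mul]
      linear_combination (algebraMap k Ω b * algebraMap k Ω b') * hz⟩
  add_mem' := by
    rintro u v ⟨a, b, rfl⟩ ⟨a', b', rfl⟩
    exact ⟨a + a', b + b', by simp only [map_add]; ring⟩
  algebraMap_mem' := fun a => ⟨a, 0, by simp⟩

variable (hz : z ^ 2 = algebraMap k Ω c) (hns : ∀ b : k, b ^ 2 ≠ c)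

include hz hns in
lemma quad_inv_mem : ∀ w ∈ quadSub hz, w⁻¹ ∈ quadSub hz := by
  rintro w ⟨a, b, rfl⟩
  rcases eq_or_ne (algebraMap k Ω a + algebraMap k Ω b * z) 0 with h0 | h0
  · rw [h0]
    exact ⟨0, 0, by simp⟩
  have hD : a ^ 2 - b ^ 2 * c ≠ 0 := by
    intro hD
    rcases eq_or_ne b 0 with hb | hb
    · rw [hb] at hD
      have ha : a = 0 := by
        have : a ^ 2 = 0 := by linear_combination hD
        exact pow_eq_zero_iff (n := 2) (by norm_num) |>.mp this
      rw [ha, hb] at h0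
      simp at h0
    · exact hns (a / b) (by field_simp; linear_combination hD)
  have hkey : (algebraMap k Ω a + algebraMap k Ω b * z) *
      (algebraMap k Ω a - algebraMap k Ω b * z) = algebraMap k Ω (a ^ 2 - b ^ 2 * c) := by
    simp only [map_sub, map_mul, map_pow]
    linear_combination (-(algebraMap k Ω b)^2) * hz
  have hD' : algebraMap k Ω (a ^ 2 - b ^ 2 * c) ≠ 0 := by
    simpa using (map_ne_zero_iff _ (algebraMap k Ω).injective).mpr hD
  refine ⟨a / (a ^ 2 - b ^ 2 * c), -b / (a ^ 2 - b ^ 2 * c), ?_⟩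
  rw [inv_eq_of_mul_eq_one_right (a := algebraMap k Ω a + algebraMap k Ω b * z)
    (b := (algebraMap k Ω a - algebraMap k Ω b * z) / algebraMap k Ω (a ^ 2 - b ^ 2 * c)) ?_]
  · rw [map_div₀, map_div₀, map_neg]
    ring
  · rw [mul_div_assoc'] at *
    rw [hkey]
    exact div_self hD'

include hz hns in
lemma quad_repr : ∀ w ∈ IntermediateField.adjoin k {z}, ∃ a b : k,
    w = algebraMap k Ω a + algebraMap k Ω b * z := by
  intro w hw
  have hle : IntermediateField.adjoin k {z} ≤
      (quadSub hz).toIntermediateField (quad_inv_mem hz hns) := by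
    rw [IntermediateField.adjoin_le_iff]
    rintro w rfl
    exact ⟨0, 1, by simp⟩
  exact hle hw

include hz hns in
lemma quad_notRange : z ∉ Set.range (algebraMap k Ω) := by
  rintro ⟨b, rfl⟩
  exact hns b ((algebraMap k Ω).injective (by rw [map_pow, hz]))

include hz hns in
lemma quad_indep : ∀ a b : k, algebraMap k Ω a + algebraMap k Ω b * z = 0 → a = 0 ∧ b = 0 := by
  intro a b h
  rcases eq_or_ne b 0 with hb | hb
  · rw [hb] at h
    simp only [map_zero, zero_mul, add_zero] at h
    exact ⟨(algebraMap k Ω).injective (by simpa using h), hb⟩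
  · exfalso
    apply quad_notRange hz hns
    refine ⟨-a / b, ?_⟩
    rw [map_div₀, map_neg]
    have hb' : algebraMap k Ω b ≠ 0 := (map_ne_zero_iff _ (algebraMap k Ω).injective).mpr hb
    field_simp
    linear_combination -h

include hz hns in
lemma quad_sq (h2 : (2 : k) ≠ 0) : ∀ w ∈ IntermediateField.adjoin k {z}, ∀ e : k,
    w ^ 2 = algebraMap k Ω e →
    (∃ a : k, w = algebraMap k Ω a) ∨ (∃ b : k, w = algebraMap k Ω b * z) := by
  intro w hw e he
  obtain ⟨a, b, rfl⟩ := quad_repr hz hns w hw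
  have hkey : algebraMap k Ω (a ^ 2 + b ^ 2 * c - e) + algebraMap k Ω (2 * a * b) * z = 0 := by
    simp only [map_add, map_sub, map_mul, map_pow, map_ofNat]
    linear_combination he - (algebraMap k Ω b)^2 * hz
  obtain ⟨-, hab⟩ := quad_indep hz hns _ _ hkey
  rcases mul_eq_zero.mp hab with h' | hb
  · rcases mul_eq_zero.mp h' with h'' | ha
    · exact absurd h'' h2
    · right
      exact ⟨b, by rw [ha, map_zero, zero_add]⟩
  · left
    exact ⟨a, by rw [hb, map_zero, zero_mul, add_zero]⟩

include hz hns in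
lemma quad_minpoly : minpoly k z = X ^ 2 - C c := by
  refine (minpoly.eq_of_irreducible_of_monic
    (X_pow_sub_C_irreducible_of_prime Nat.prime_two hns) ?_
    (monic_X_pow_sub_C c (by norm_num))).symm
  rw [map_sub, map_pow, aeval_X, aeval_C, hz, sub_self]

include hz in
lemma quad_isIntegral : IsIntegral k z :=
  ⟨X ^ 2 - C c, monic_X_pow_sub_C c (by norm_num), by
    rw [eval₂_sub, eval₂_pow, eval₂_X, eval₂_C, hz, sub_self]⟩

include hz hns in
lemma quad_finrank : Module.finrank k (IntermediateField.adjoin k {z}) = 2 := by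
  rw [IntermediateField.adjoin.finrank (quad_isIntegral hz), quad_minpoly hz hns,
    natDegree_X_pow_sub_C]

end Quad


open IntermediateField Polynomial

section Infra

variable {K : Type*} [Field K]

/-- Extend an algebra hom on an intermediate field to a global automorphism. -/
lemma ext_global (W : IntermediateField K (AlgebraicClosure K)) (f : ↥W →ₐ[K] AlgebraicClosure K) :
    ∃ g : AlgebraicClosure K ≃ₐ[K] AlgebraicClosure K, ∀ w : ↥W, g ↑w = f w := by
  obtain ⟨φ, hφ⟩ := IntermediateField.exists_algHom_of_splits
    (fun s => ⟨Algebra.IsIntegral.isIntegral s, IsAlgClosed.splits _⟩) f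
  refine ⟨(Algebra.IsAlgebraic.algEquivEquivAlgHom K (AlgebraicClosure K)).symm φ, fun w => ?_⟩
  have h1 : ((Algebra.IsAlgebraic.algEquivEquivAlgHom K (AlgebraicClosure K)).symm φ : AlgebraicClosure K ≃ₐ[K] AlgebraicClosure K) ↑w = φ ↑w := rfl
  rw [h1, ← hφ]
  rfl

lemma agree_on_adjoin (g h : AlgebraicClosure K ≃ₐ[K] AlgebraicClosure K) (S : Set (AlgebraicClosure K)) (hS : ∀ s ∈ S, g s = h s) :
    ∀ w ∈ adjoin K S, g w = h w := by
  intro w hw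
  have hinv : ∀ x ∈ AlgHom.equalizer (g : AlgebraicClosure K →ₐ[K] AlgebraicClosure K) (h : AlgebraicClosure K →ₐ[K] AlgebraicClosure K),
      x⁻¹ ∈ AlgHom.equalizer (g : AlgebraicClosure K →ₐ[K] AlgebraicClosure K) (h : AlgebraicClosure K →ₐ[K] AlgebraicClosure K) := by
    intro x hx
    have hx' : g x = h x := hx
    show g x⁻¹ = h x⁻¹
    rw [map_inv₀, map_inv₀, hx']
  have hle : adjoin K S ≤ (AlgHom.equalizer (g : AlgebraicClosure K →ₐ[K] AlgebraicClosure K) (h : AlgebraicClosure K →ₐ[K] AlgebraicClosure K)).toIntermediateField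
      hinv := by
    rw [adjoin_le_iff]
    exact fun s hs => hS s hs
  exact hle hw

lemma adjoin_into (g : AlgebraicClosure K ≃ₐ[K] AlgebraicClosure K) (W : IntermediateField K (AlgebraicClosure K)) (S : Set (AlgebraicClosure K))
    (hS : ∀ s ∈ S, g s ∈ W) : ∀ w ∈ adjoin K S, g w ∈ W := by
  intro w hw
  have hinv : ∀ x ∈ W.toSubalgebra.comap (g : AlgebraicClosure K →ₐ[K] AlgebraicClosure K),
      x⁻¹ ∈ W.toSubalgebra.comap (g : AlgebraicClosure K →ₐ[K] AlgebraicClosure K) := by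
    intro x hx
    have hx' : g x ∈ W := hx
    show g x⁻¹ ∈ W
    rw [map_inv₀]
    exact W.inv_mem hx'
  have hle : adjoin K S ≤ (W.toSubalgebra.comap (g : AlgebraicClosure K →ₐ[K] AlgebraicClosure K)).toIntermediateField hinv := by
    rw [adjoin_le_iff]
    exact fun s hs => hS s hs
  exact hle hw

variable (L : IntermediateField K (AlgebraicClosure K))

noncomputable def piRes : (AlgebraicClosure K ≃ₐ[K] AlgebraicClosure K) →* (↥(normalClosure K (↥L) (AlgebraicClosure K)) ≃ₐ[K] ↥(normalClosure K (↥L) (AlgebraicClosure K))) :=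
  AlgEquiv.restrictNormalHom ↥(normalClosure K (↥L) (AlgebraicClosure K))

lemma piRes_apply (g : AlgebraicClosure K ≃ₐ[K] AlgebraicClosure K) (w : ↥(normalClosure K (↥L) (AlgebraicClosure K))) : ((piRes L g w : ↥(normalClosure K (↥L) (AlgebraicClosure K))) : AlgebraicClosure K) = g ↑w :=
  AlgEquiv.restrictNormal_commutes g ↥(normalClosure K (↥L) (AlgebraicClosure K)) w

lemma piRes_surjective : Function.Surjective (piRes L) :=
  AlgEquiv.restrictNormalHom_surjective (AlgebraicClosure K)

lemma piRes_eq (g h : AlgebraicClosure K ≃ₐ[K] AlgebraicClosure K) (hgh : ∀ w ∈ normalClosure K (↥L) (AlgebraicClosure K), g w = h w) : piRes L g = piRes L h := by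
  refine AlgEquiv.ext fun w => Subtype.ext ?_
  exact (piRes_apply L g w).trans ((hgh ↑w w.2).trans (piRes_apply L h w).symm)

lemma piRes_one (g : AlgebraicClosure K ≃ₐ[K] AlgebraicClosure K) (hg : ∀ w ∈ normalClosure K (↥L) (AlgebraicClosure K), g w = w) : piRes L g = 1 := by
  have := piRes_eq L g 1 (fun w hw => by rw [hg w hw]; rfl)
  rw [this, map_one]

lemma piRes_ne (g h : AlgebraicClosure K ≃ₐ[K] AlgebraicClosure K) (w : AlgebraicClosure K) (hw : w ∈ normalClosure K (↥L) (AlgebraicClosure K)) (hne : g w ≠ h w) :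
    piRes L g ≠ piRes L h := by
  intro heq
  apply hne
  have h1 := piRes_apply L g ⟨w, hw⟩
  have h2 := piRes_apply L h ⟨w, hw⟩
  rw [← h1, ← h2, heq]

end Infra

/-- Lemma 4.5 (Monnet): for `E = K(√d)` and `L = E(√α)`, the Galois closure group of
`L/K` is `V₄` if `N_{E/K}(α) ∈ K^{×2}`, `C₄` if `N_{E/K}(α) ∈ d·K^{×2}`, and `D₄`
otherwise. -/
theorem lem_GG_norm_conditions (K : Type) [Field K] [Algebra ℚ_[2] K]
    [FiniteDimensional ℚ_[2] K]
    (d : K) (hd0 : d ≠ 0) (hd : ¬ IsSquare d)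
    (x : AlgebraicClosure K) (hx : x ^ 2 = algebraMap K (AlgebraicClosure K) d)
    (α : AlgebraicClosure K) (hαE : α ∈ K⟮x⟯) (hα0 : α ≠ 0)
    (hαns : ¬ ∃ β ∈ K⟮x⟯, β ^ 2 = α)
    (y : AlgebraicClosure K) (hy : y ^ 2 = α) :
    (IsSquare (Algebra.norm K (⟨α, hαE⟩ : K⟮x⟯)) →
        GalClosureGrpIso K (K⟮x⟯ ⊔ K⟮y⟯) (Multiplicative (ZMod 2 × ZMod 2))) ∧
    ((∃ c : K, Algebra.norm K (⟨α, hαE⟩ : K⟮x⟯) = d * c ^ 2) →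
        GalClosureGrpIso K (K⟮x⟯ ⊔ K⟮y⟯) (Multiplicative (ZMod 4))) ∧
    ((¬ IsSquare (Algebra.norm K (⟨α, hαE⟩ : K⟮x⟯)) ∧
        ¬ ∃ c : K, Algebra.norm K (⟨α, hαE⟩ : K⟮x⟯) = d * c ^ 2) →
        GalClosureGrpIso K (K⟮x⟯ ⊔ K⟮y⟯) (DihedralGroup 4)) := by
  haveI hCZ : CharZero K := charZero_of_injective_algebraMap (algebraMap ℚ_[2] K).injective
  haveI hCZF : CharZero (AlgebraicClosure K) :=
    charZero_of_injective_algebraMap (algebraMap K (AlgebraicClosure K)).injective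
  have hdK : ∀ b : K, b ^ 2 ≠ d := by
    intro b hb
    exact hd ⟨b, by rw [← hb]; ring⟩
  have hx0 : x ≠ 0 := by
    intro h
    apply hd0
    have h0 : algebraMap K (AlgebraicClosure K) d = 0 := by rw [← hx, h]; ring
    exact (_root_.map_eq_zero _).mp h0
  have neg_ne : ∀ w : AlgebraicClosure K, w ≠ 0 → w ≠ -w := by
    intro w hw h
    apply hw
    have h2 : (2 : AlgebraicClosure K) * w = 0 := by linear_combination h
    rcases mul_eq_zero.mp h2 with h' | h'
    · exact absurd h' two_ne_zero
    · exact h'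
  have hxx : x ≠ -x := neg_ne x hx0
  have hy0 : y ≠ 0 := by
    intro h
    apply hα0
    rw [← hy, h]
    ring
  have hyy : y ≠ -y := neg_ne y hy0
  have hxE : x ∈ K⟮x⟯ := mem_adjoin_simple_self K x
  have hIx : IsIntegral K x := quad_isIntegral hx
  haveI hFDE : FiniteDimensional K ↥K⟮x⟯ := IntermediateField.adjoin.finiteDimensional hIx
  have hfinE : Module.finrank K ↥K⟮x⟯ = 2 := quad_finrank hx hdK
  -- the conjugation embedding τ of E = K⟮x⟯
  have haev : Polynomial.aeval (-x)
      (minpoly K (IntermediateField.adjoin.powerBasis hIx).gen) = 0 := by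
    rw [IntermediateField.adjoin.powerBasis_gen, IntermediateField.minpoly_gen,
      quad_minpoly hx hdK, map_sub, map_pow, Polynomial.aeval_X, Polynomial.aeval_C, neg_sq,
      hx, sub_self]
  set τ : ↥K⟮x⟯ →ₐ[K] (AlgebraicClosure K) :=
    (IntermediateField.adjoin.powerBasis hIx).lift (-x) haev with hτdef
  obtain ⟨Φ, hΦ⟩ := ext_global K⟮x⟯ τ
  have hpbgen : (((IntermediateField.adjoin.powerBasis hIx).gen : ↥K⟮x⟯) : AlgebraicClosure K)
      = x := by
    rw [IntermediateField.adjoin.powerBasis_gen]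
    rfl
  have hτgen : τ (IntermediateField.adjoin.powerBasis hIx).gen = -x :=
    PowerBasis.lift_gen _ _ _
  have hΦx : Φ x = -x := by
    have h1 := hΦ (IntermediateField.adjoin.powerBasis hIx).gen
    rw [hpbgen, hτgen] at h1
    exact h1
  have hΦa : ∀ c : K, Φ (algebraMap K (AlgebraicClosure K) c) = algebraMap K (AlgebraicClosure K) c :=
    fun c => Φ.commutes c
  have hΦE : ∀ w ∈ K⟮x⟯, Φ w ∈ K⟮x⟯ := by
    apply adjoin_into Φ K⟮x⟯ {x}
    rintro s rfl
    rw [hΦx]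
    exact neg_mem hxE
  have hΦΦ : ∀ w ∈ K⟮x⟯, Φ (Φ w) = w := by
    have := agree_on_adjoin (Φ * Φ) 1 {x} ?_
    · intro w hw
      have h1 := this w hw
      rw [AlgEquiv.mul_apply] at h1
      exact h1.trans rfl
    · rintro s rfl
      rw [AlgEquiv.mul_apply, hΦx, map_neg, hΦx, neg_neg]
      rfl
  -- classification of the embeddings of E
  have hE_cases : ∀ σ : ↥K⟮x⟯ →ₐ[K] AlgebraicClosure K, σ = (K⟮x⟯).val ∨ σ = τ := by
    intro σ
    have hgen2 : ((IntermediateField.adjoin.powerBasis hIx).gen) ^ 2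
        = algebraMap K ↥K⟮x⟯ d := by
      apply Subtype.ext
      have : ((((IntermediateField.adjoin.powerBasis hIx).gen) ^ 2 : ↥K⟮x⟯) :
          AlgebraicClosure K) = x ^ 2 := by
        push_cast
        rw [hpbgen]
      exact this.trans (by rw [hx]; rfl)
    have hσ2 : (σ (IntermediateField.adjoin.powerBasis hIx).gen) ^ 2 = x ^ 2 := by
      rw [← map_pow, hgen2, AlgHom.commutes, hx]
    rcases sq_eq_sq_field hσ2 with h | h
    · left
      refine PowerBasis.algHom_ext (IntermediateField.adjoin.powerBasis hIx) ?_
      rw [h]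
      exact hpbgen.symm
    · right
      refine PowerBasis.algHom_ext (IntermediateField.adjoin.powerBasis hIx) ?_
      rw [h, hτgen]
  have hvalτ : (K⟮x⟯).val ≠ τ := by
    intro h
    apply hxx
    have h1 : (K⟮x⟯).val (IntermediateField.adjoin.powerBasis hIx).gen = x := hpbgen
    rw [h, hτgen] at h1
    exact h1.symm
  -- norm identity
  have hNorm : algebraMap K (AlgebraicClosure K) (Algebra.norm K (⟨α, hαE⟩ : ↥K⟮x⟯))
      = α * Φ α := by
    rw [Algebra.norm_eq_prod_embeddings]
    have huniv : (Finset.univ : Finset (↥K⟮x⟯ →ₐ[K] AlgebraicClosure K))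
        = {(K⟮x⟯).val, τ} := by
      ext σ
      simp only [Finset.mem_univ, true_iff, Finset.mem_insert, Finset.mem_singleton]
      exact hE_cases σ
    rw [huniv, Finset.prod_pair hvalτ, ← hΦ ⟨α, hαE⟩]
    rfl
  -- facts about E-level squares
  have hαEns : ∀ b : ↥K⟮x⟯, b ^ 2 ≠ (⟨α, hαE⟩ : ↥K⟮x⟯) := by
    intro b hb
    apply hαns
    refine ⟨↑b, b.2, ?_⟩
    have := congrArg Subtype.val hb
    push_cast at this
    exact this
  have hyE2 : y ^ 2 = algebraMap ↥K⟮x⟯ (AlgebraicClosure K) (⟨α, hαE⟩ : ↥K⟮x⟯) := by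
    rw [hy]; rfl
  haveI hCZE : CharZero ↥K⟮x⟯ :=
    charZero_of_injective_algebraMap (algebraMap K ↥K⟮x⟯).injective
  have h2E : (2 : ↥K⟮x⟯) ≠ 0 := two_ne_zero
  have h2K : (2 : K) ≠ 0 := two_ne_zero
  -- the quartic field L
  set Lf := K⟮x⟯ ⊔ K⟮y⟯ with hLdef
  have hLadj : Lf = adjoin K {x, y} := by
    rw [hLdef, ← IntermediateField.adjoin_union, Set.singleton_union]
  have hxL : x ∈ Lf := (le_sup_left : K⟮x⟯ ≤ Lf) hxE
  have hyL : y ∈ Lf := (le_sup_right : K⟮y⟯ ≤ Lf) (mem_adjoin_simple_self K y)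
  have hαL : α ∈ Lf := (le_sup_left : K⟮x⟯ ≤ Lf) hαE
  have hLres : Lf = IntermediateField.restrictScalars K (adjoin ↥K⟮x⟯ {y}) := by
    rw [hLadj, show ({x, y} : Set (AlgebraicClosure K)) = {x} ∪ {y} from
      (Set.singleton_union).symm, ← IntermediateField.adjoin_adjoin_left]
  have hIy : IsIntegral K y := Algebra.IsIntegral.isIntegral y
  haveI hFDy : FiniteDimensional K ↥K⟮y⟯ := IntermediateField.adjoin.finiteDimensional hIy
  haveI hFDL : FiniteDimensional K ↥Lf := IntermediateField.finiteDimensional_sup K⟮x⟯ K⟮y⟯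
  have hfinEL : Module.finrank ↥K⟮x⟯ ↥(adjoin ↥K⟮x⟯ {y}) = 2 := quad_finrank hyE2 hαEns
  have hfinL : Module.finrank K ↥Lf = 4 := by
    have t2 := Module.finrank_mul_finrank K ↥K⟮x⟯ ↥(adjoin ↥K⟮x⟯ {y})
    rw [hfinE, hfinEL] at t2
    rw [hLres]
    exact t2.symm
  -- the normal closure
  have hLN : Lf ≤ normalClosure K ↥Lf (AlgebraicClosure K) :=
    IntermediateField.le_normalClosure Lf
  have hy'2 : (Φ y) ^ 2 = Φ α := by rw [← map_pow, hy]
  have hy'0 : Φ y ≠ 0 := fun h => hy0 (Φ.injective (by rw [h, map_zero]))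
  have hy'N : Φ y ∈ normalClosure K ↥Lf (AlgebraicClosure K) := by
    have hr := AlgHom.fieldRange_le_normalClosure (Φ.toAlgHom.comp Lf.val)
    exact hr ⟨⟨y, hyL⟩, rfl⟩
  have hgx : ∀ g : (AlgebraicClosure K ≃ₐ[K] AlgebraicClosure K), g x = x ∨ g x = -x := by
    intro g
    apply sq_eq_sq_field
    rw [← map_pow, hx, g.commutes, ← hx]
  have hgα : ∀ g : (AlgebraicClosure K ≃ₐ[K] AlgebraicClosure K), g x = x → g α = α := by
    intro g hgx'
    have := agree_on_adjoin g 1 {x} (by rintro s rfl; rw [hgx']; rfl) α hαE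
    exact this.trans rfl
  have hgαΦ : ∀ g : (AlgebraicClosure K ≃ₐ[K] AlgebraicClosure K), g x = -x → g α = Φ α := by
    intro g hgx'
    exact agree_on_adjoin g Φ {x} (by rintro s rfl; rw [hgx', hΦx]) α hαE
  have hgy : ∀ g : (AlgebraicClosure K ≃ₐ[K] AlgebraicClosure K),
      (g y = y ∨ g y = -y) ∨ (g y = Φ y ∨ g y = -(Φ y)) := by
    intro g
    rcases hgx g with h | h
    · left
      apply sq_eq_sq_field
      rw [← map_pow, hy, hgα g h, ← hy]
    · right
      apply sq_eq_sq_field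
      rw [← map_pow, hy, hgαΦ g h, ← hy'2]
  have hNCle : ∀ W : IntermediateField K (AlgebraicClosure K), Lf ≤ W → Φ y ∈ W →
      normalClosure K ↥Lf (AlgebraicClosure K) ≤ W := by
    intro W hLW hy'W
    rw [normalClosure_le_iff]
    intro f
    obtain ⟨g, hg⟩ := ext_global Lf f
    intro w hw
    obtain ⟨v, hv⟩ := hw
    have hv' : f v = w := hv
    rw [← hv', ← hg v]
    refine adjoin_into g W {x, y} ?_ ↑v (by rw [← hLadj]; exact v.2)
    intro s hs
    simp only [Set.mem_insert_iff, Set.mem_singleton_iff] at hs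
    rcases hs with rfl | rfl
    · rcases hgx g with h | h <;> rw [h]
      · exact hLW hxL
      · exact neg_mem (hLW hxL)
    · rcases hgy g with (h | h) | (h | h) <;> rw [h]
      · exact hLW hyL
      · exact neg_mem (hLW hyL)
      · exact hy'W
      · exact neg_mem hy'W
  have hαE0 : (⟨α, hαE⟩ : ↥K⟮x⟯) ≠ 0 := fun h => hα0 (congrArg Subtype.val h)
  have hN0 : Algebra.norm K (⟨α, hαE⟩ : ↥K⟮x⟯) ≠ 0 := Algebra.norm_ne_zero_iff.mpr hαE0
  refine ⟨?_, ?_, ?_⟩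
  · -- V₄ case
    intro hsq
    obtain ⟨c, hc⟩ := hsq
    have hc0 : c ≠ 0 := by
      intro h0
      apply hN0
      rw [hc, h0, mul_zero]
    have hcF0 : algebraMap K (AlgebraicClosure K) c ≠ 0 :=
      (map_ne_zero_iff _ (algebraMap K _).injective).mpr hc0
    have hNc : α * Φ α = algebraMap K (AlgebraicClosure K) c ^ 2 := by
      rw [← hNorm, hc, map_mul]
      ring
    have hyy' : y * Φ y = algebraMap K (AlgebraicClosure K) c ∨
        y * Φ y = -(algebraMap K (AlgebraicClosure K) c) := by
      apply sq_eq_sq_field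
      rw [mul_pow, hy, hy'2, hNc]
    have hy'L : Φ y ∈ Lf := by
      have hyinv : Φ y = (y * Φ y) * y⁻¹ := by field_simp
      rcases hyy' with h | h <;> rw [hyinv, h]
      · exact mul_mem (Lf.algebraMap_mem c) (inv_mem hyL)
      · exact mul_mem (neg_mem (Lf.algebraMap_mem c)) (inv_mem hyL)
    have hNeq : normalClosure K ↥Lf (AlgebraicClosure K) = Lf :=
      le_antisymm (hNCle Lf le_rfl hy'L) hLN
    haveI : IsGalois K ↥(normalClosure K ↥Lf (AlgebraicClosure K)) := ⟨⟩
    have hcard : Nat.card (↥(normalClosure K ↥Lf (AlgebraicClosure K)) ≃ₐ[K]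
        ↥(normalClosure K ↥Lf (AlgebraicClosure K))) = 4 := by
      rw [IsGalois.card_aut_eq_finrank, hNeq]
      exact hfinL
    have hexp : ∀ σ : (↥(normalClosure K ↥Lf (AlgebraicClosure K)) ≃ₐ[K]
        ↥(normalClosure K ↥Lf (AlgebraicClosure K))), σ ^ 2 = 1 := by
      intro σ
      obtain ⟨g, rfl⟩ := piRes_surjective Lf σ
      rw [← map_pow]
      apply piRes_one
      intro w hw
      rw [hNeq, hLadj] at hw
      have hagree := agree_on_adjoin (g ^ 2) 1 {x, y} ?_ w hw
      · exact hagree.trans rfl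
      intro s hs
      simp only [Set.mem_insert_iff, Set.mem_singleton_iff] at hs
      have hg2 : ∀ z, (g ^ 2) z = g (g z) := fun z => by rw [pow_two, AlgEquiv.mul_apply]
      rcases hs with rfl | rfl
      · rw [hg2]
        show g (g s) = s
        rcases hgx g with h | h
        · rw [h, h]
        · rw [h, map_neg, h, neg_neg]
      · rw [hg2]
        show g (g s) = s
        rcases hgx g with hgx' | hgx'
        · have hga := hgα g hgx'
          have hgy2 : g s = s ∨ g s = -s := by
            apply sq_eq_sq_field
            rw [← map_pow, hy, hga, ← hy]
          rcases hgy2 with h' | h'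
          · rw [h', h']
          · rw [h', map_neg, h', neg_neg]
        · have hgαv := hgαΦ g hgx'
          have hgy0 : g s ≠ 0 := fun hh => hy0 (g.injective (by rw [hh, map_zero]))
          have h2' : (g s * s) ^ 2 = algebraMap K (AlgebraicClosure K) c ^ 2 := by
            rw [mul_pow, ← map_pow, hy, hgαv]
            linear_combination hNc
          have hε : g (g s * s) = g s * s := by
            rcases sq_eq_sq_field h2' with h' | h' <;> rw [h']
            · exact g.commutes c
            · rw [map_neg, g.commutes c]
          have e1 : g (g s) * g s = s * g s := by
            calc g (g s) * g s = g (g s * s) := (map_mul g (g s) s).symm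
            _ = g s * s := hε
            _ = s * g s := mul_comm _ _
          exact mul_right_cancel₀ hgy0 e1
    exact GL1 hcard hexp
  · -- C₄ case
    intro hdc
    obtain ⟨c, hc⟩ := hdc
    have hc0 : c ≠ 0 := by
      intro h0
      apply hN0
      rw [hc, h0]
      ring
    have hcF0 : algebraMap K (AlgebraicClosure K) c ≠ 0 :=
      (map_ne_zero_iff _ (algebraMap K _).injective).mpr hc0
    have hNc : α * Φ α = x ^ 2 * algebraMap K (AlgebraicClosure K) c ^ 2 := by
      rw [← hNorm, hc, map_mul, map_pow, ← hx]
    have hyy' : y * Φ y = x * algebraMap K (AlgebraicClosure K) c ∨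
        y * Φ y = -(x * algebraMap K (AlgebraicClosure K) c) := by
      apply sq_eq_sq_field
      rw [mul_pow, hy, hy'2, mul_pow]
      exact hNc
    have hy'L : Φ y ∈ Lf := by
      have hyinv : Φ y = (y * Φ y) * y⁻¹ := by field_simp
      rcases hyy' with h | h <;> rw [hyinv, h]
      · exact mul_mem (mul_mem hxL (Lf.algebraMap_mem c)) (inv_mem hyL)
      · exact mul_mem (neg_mem (mul_mem hxL (Lf.algebraMap_mem c))) (inv_mem hyL)
    have hNeq : normalClosure K ↥Lf (AlgebraicClosure K) = Lf :=
      le_antisymm (hNCle Lf le_rfl hy'L) hLN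
    haveI : IsGalois K ↥(normalClosure K ↥Lf (AlgebraicClosure K)) := ⟨⟩
    have hcard : Nat.card (↥(normalClosure K ↥Lf (AlgebraicClosure K)) ≃ₐ[K]
        ↥(normalClosure K ↥Lf (AlgebraicClosure K))) = 4 := by
      rw [IsGalois.card_aut_eq_finrank, hNeq]
      exact hfinL
    have hΦ2y : Φ (Φ y) = -y := by
      have key : ∀ ε : AlgebraicClosure K, y * Φ y = ε → Φ ε = -ε → Φ (Φ y) = -y := by
        intro ε hε hΦε
        have e0 := congrArg Φ hε
        rw [map_mul, hΦε, ← hε] at e0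
        have e2 : Φ (Φ y) * Φ y = -y * Φ y := by
          rw [mul_comm, e0]
          ring
        exact mul_right_cancel₀ hy'0 e2
      rcases hyy' with h | h
      · exact key _ h (by rw [map_mul, hΦx, Φ.commutes c]; ring)
      · exact key _ h (by rw [map_neg, map_mul, hΦx, Φ.commutes c]; ring)
    have hr2ne : (piRes Lf Φ) ^ 2 ≠ 1 := by
      rw [← map_pow]
      intro h1
      have hne := piRes_ne Lf (Φ ^ 2) 1 y (hLN hyL) ?_
      · exact hne (h1.trans (map_one (piRes Lf)).symm)
      · rw [pow_two, AlgEquiv.mul_apply, hΦ2y]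
        exact fun hh => hyy hh.symm
    exact GL2 hcard (piRes Lf Φ) hr2ne
  · -- D₄ case
    rintro ⟨hnsq, hnd⟩
    have hΦαE : Φ α ∈ K⟮x⟯ := hΦE α hαE
    have hΦαL : Φ α ∈ Lf := (le_sup_left : K⟮x⟯ ≤ Lf) hΦαE
    have hLfns : ∀ b : ↥Lf, b ^ 2 ≠ (⟨Φ α, hΦαL⟩ : ↥Lf) := by
      intro b hb
      have hbF : (↑b : AlgebraicClosure K) ^ 2 = Φ α := by
        have h0 := congrArg Subtype.val hb
        push_cast at h0
        exact h0
      have hbW : (↑b : AlgebraicClosure K) ∈ adjoin ↥K⟮x⟯ {y} := by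
        have hle : Lf ≤ IntermediateField.restrictScalars K (adjoin ↥K⟮x⟯ {y}) := le_of_eq hLres
        exact hle b.2
      have hb2 : (↑b : AlgebraicClosure K) ^ 2
          = algebraMap ↥K⟮x⟯ (AlgebraicClosure K) (⟨Φ α, hΦαE⟩ : ↥K⟮x⟯) := hbF
      rcases quad_sq hyE2 hαEns h2E ↑b hbW _ hb2 with ⟨a, ha⟩ | ⟨a, ha⟩
      · apply hαns
        refine ⟨Φ ↑a, hΦE ↑a a.2, ?_⟩
        have ha' : (↑b : AlgebraicClosure K) = ↑a := ha
        calc (Φ ↑a) ^ 2 = Φ ((↑a : AlgebraicClosure K) ^ 2) := (map_pow Φ _ 2).symm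
        _ = Φ ((↑b : AlgebraicClosure K) ^ 2) := by rw [ha']
        _ = Φ (Φ α) := by rw [hbF]
        _ = α := hΦΦ α hαE
      · have ha' : (↑b : AlgebraicClosure K) = ↑a * y := ha
        have hv2 : ((↑a : AlgebraicClosure K) * α) ^ 2
            = algebraMap K (AlgebraicClosure K) (Algebra.norm K (⟨α, hαE⟩ : ↥K⟮x⟯)) := by
          rw [hNorm]
          have h1 : (↑a : AlgebraicClosure K) ^ 2 * α = Φ α := by
            have h0 := hbF
            rw [ha', mul_pow, hy] at h0
            exact h0
          linear_combination α * h1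
        have hvE : (↑a : AlgebraicClosure K) * α ∈ adjoin K {x} := mul_mem a.2 hαE
        rcases quad_sq hx hdK h2K _ hvE _ hv2 with ⟨t, ht⟩ | ⟨t, ht⟩
        · apply hnsq
          refine ⟨t, ?_⟩
          apply (algebraMap K (AlgebraicClosure K)).injective
          rw [map_mul, ← hv2, ht]
          ring
        · apply hnd
          refine ⟨t, ?_⟩
          apply (algebraMap K (AlgebraicClosure K)).injective
          rw [map_mul, map_pow, ← hv2, ht, mul_pow, hx]
          ring
    -- the octic field M
    have hy'E2 : (Φ y) ^ 2 = algebraMap ↥Lf (AlgebraicClosure K) (⟨Φ α, hΦαL⟩ : ↥Lf) := by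
      rw [hy'2]; rfl
    haveI hCZL : CharZero ↥Lf := charZero_of_injective_algebraMap (algebraMap K ↥Lf).injective
    have hyMf' : Φ y ∈ IntermediateField.restrictScalars K (adjoin ↥Lf {Φ y}) :=
      mem_adjoin_simple_self ↥Lf (Φ y)
    have hLM : Lf ≤ IntermediateField.restrictScalars K (adjoin ↥Lf {Φ y}) := by
      intro w hw
      exact (adjoin ↥Lf {Φ y}).algebraMap_mem ⟨w, hw⟩
    have hNM : normalClosure K ↥Lf (AlgebraicClosure K)
        = IntermediateField.restrictScalars K (adjoin ↥Lf {Φ y}) := by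
      refine le_antisymm (hNCle _ hLM hyMf') ?_
      have hMN : adjoin ↥Lf {Φ y} ≤ IntermediateField.extendScalars hLN := by
        rw [adjoin_le_iff]
        rintro s rfl
        exact hy'N
      intro w hw
      exact hMN hw
    have hfinM : Module.finrank K
        ↥(IntermediateField.restrictScalars K (adjoin ↥Lf {Φ y})) = 8 := by
      have t1 : Module.finrank ↥Lf ↥(adjoin ↥Lf {Φ y}) = 2 := quad_finrank hy'E2 hLfns
      have t2 := Module.finrank_mul_finrank K ↥Lf ↥(adjoin ↥Lf {Φ y})
      rw [hfinL, t1] at t2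
      exact t2.symm
    haveI : IsGalois K ↥(normalClosure K ↥Lf (AlgebraicClosure K)) := ⟨⟩
    have hcard : Nat.card (↥(normalClosure K ↥Lf (AlgebraicClosure K)) ≃ₐ[K]
        ↥(normalClosure K ↥Lf (AlgebraicClosure K))) = 8 := by
      rw [IsGalois.card_aut_eq_finrank, hNM]
      exact hfinM
    -- Ψ : fixes L, negates Φ y
    have hIy' : IsIntegral ↥Lf (Φ y) := quad_isIntegral hy'E2
    have haev2 : Polynomial.aeval (-(Φ y))
        (minpoly ↥Lf (IntermediateField.adjoin.powerBasis hIy').gen) = 0 := by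
      rw [IntermediateField.adjoin.powerBasis_gen, IntermediateField.minpoly_gen,
        quad_minpoly hy'E2 hLfns, map_sub, map_pow, Polynomial.aeval_X, Polynomial.aeval_C,
        neg_sq, hy'E2, sub_self]
    set ψ0 : ↥(adjoin ↥Lf {Φ y}) →ₐ[↥Lf] (AlgebraicClosure K) :=
      (IntermediateField.adjoin.powerBasis hIy').lift (-(Φ y)) haev2 with hψdef
    obtain ⟨Ψ, hΨ⟩ := ext_global (IntermediateField.restrictScalars K (adjoin ↥Lf {Φ y}))
      (ψ0.restrictScalars K)
    have hΨL : ∀ w ∈ Lf, Ψ w = w := by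
      intro w hw
      have h1 : Ψ w = ψ0 (algebraMap ↥Lf ↥(adjoin ↥Lf {Φ y}) ⟨w, hw⟩) := hΨ ⟨w, hLM hw⟩
      exact h1.trans (ψ0.commutes ⟨w, hw⟩)
    have hΨx : Ψ x = x := hΨL x hxL
    have hΨy : Ψ y = y := hΨL y hyL
    have hΨy' : Ψ (Φ y) = -(Φ y) := by
      have h1 : Ψ (Φ y) = ψ0 (IntermediateField.AdjoinSimple.gen ↥Lf (Φ y)) := hΨ ⟨Φ y, hyMf'⟩
      have h3 : ψ0 (IntermediateField.AdjoinSimple.gen ↥Lf (Φ y)) = -(Φ y) := by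
        rw [hψdef, ← IntermediateField.adjoin.powerBasis_gen hIy']
        exact PowerBasis.lift_gen _ _ _
      exact h1.trans h3
    have hΦy' : Φ (Φ y) = y ∨ Φ (Φ y) = -y := by
      apply sq_eq_sq_field
      rw [← map_pow, hy'2, hΦΦ α hαE, ← hy]
    obtain ⟨R, hRx, hRy, hRy'⟩ : ∃ R : AlgebraicClosure K ≃ₐ[K] AlgebraicClosure K,
        R x = -x ∧ R y = Φ y ∧ R (Φ y) = -y := by
      rcases hΦy' with h | h
      · refine ⟨Φ * Ψ, ?_, ?_, ?_⟩
        · rw [AlgEquiv.mul_apply, hΨx, hΦx]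
        · rw [AlgEquiv.mul_apply, hΨy]
        · rw [AlgEquiv.mul_apply, hΨy', map_neg, h]
      · exact ⟨Φ, hΦx, rfl, h⟩
    have hxN : x ∈ normalClosure K ↥Lf (AlgebraicClosure K) := hLN hxL
    have hyN : y ∈ normalClosure K ↥Lf (AlgebraicClosure K) := hLN hyL
    have hNadj : normalClosure K ↥Lf (AlgebraicClosure K) ≤ adjoin K {x, y, Φ y} := by
      apply hNCle
      · rw [hLadj]
        apply IntermediateField.adjoin.mono
        intro s hs
        simp only [Set.mem_insert_iff, Set.mem_singleton_iff] at hs ⊢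
        tauto
      · exact subset_adjoin K _ (by simp)
    have fix_gen : ∀ g : AlgebraicClosure K ≃ₐ[K] AlgebraicClosure K,
        g x = x → g y = y → g (Φ y) = Φ y → piRes Lf g = 1 := by
      intro g h1 h2 h3
      apply piRes_one
      intro w hw
      have h4 := agree_on_adjoin g 1 {x, y, Φ y} ?_ w (hNadj hw)
      · exact h4.trans rfl
      · intro s hs
        simp only [Set.mem_insert_iff, Set.mem_singleton_iff] at hs
        rcases hs with rfl | rfl | rfl
        · rw [h1]; rfl
        · rw [h2]; rfl
        · rw [h3]; rfl
    have hR2x : R (R x) = x := by rw [hRx, map_neg, hRx, neg_neg]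
    have hR2y : R (R y) = -y := by rw [hRy, hRy']
    have hR2y' : R (R (Φ y)) = -(Φ y) := by rw [hRy', map_neg, hRy]
    have key4 : ∀ z, (R ^ 4) z = R (R (R (R z))) := by
      intro z
      rw [pow_succ, pow_succ, pow_two, AlgEquiv.mul_apply, AlgEquiv.mul_apply,
        AlgEquiv.mul_apply]
    have hr4 : (piRes Lf R) ^ 4 = 1 := by
      rw [← map_pow]
      apply fix_gen
      · rw [key4, hR2x, hR2x]
      · rw [key4, hR2y, map_neg, map_neg, hR2y, neg_neg]
      · rw [key4, hR2y', map_neg, map_neg, hR2y', neg_neg]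
    have hr2ne : (piRes Lf R) ^ 2 ≠ 1 := by
      rw [← map_pow]
      intro h1
      have hne := piRes_ne Lf (R ^ 2) 1 y hyN ?_
      · exact hne (h1.trans (map_one (piRes Lf)).symm)
      · rw [pow_two, AlgEquiv.mul_apply, hR2y]
        exact fun hh => hyy hh.symm
    have hs2 : (piRes Lf Ψ) ^ 2 = 1 := by
      rw [← map_pow]
      apply fix_gen
      · rw [pow_two, AlgEquiv.mul_apply, hΨx, hΨx]
      · rw [pow_two, AlgEquiv.mul_apply, hΨy, hΨy]
      · rw [pow_two, AlgEquiv.mul_apply, hΨy', map_neg, hΨy', neg_neg]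
    have hRSx : (R * Ψ) x = -x := by rw [AlgEquiv.mul_apply, hΨx, hRx]
    have hRSy : (R * Ψ) y = Φ y := by rw [AlgEquiv.mul_apply, hΨy, hRy]
    have hRSy' : (R * Ψ) (Φ y) = y := by rw [AlgEquiv.mul_apply, hΨy', map_neg, hRy', neg_neg]
    have hrs2 : ((piRes Lf R) * (piRes Lf Ψ)) ^ 2 = 1 := by
      rw [← map_mul, ← map_pow]
      apply fix_gen
      · rw [pow_two, AlgEquiv.mul_apply, hRSx, map_neg, hRSx, neg_neg]
      · rw [pow_two, AlgEquiv.mul_apply, hRSy, hRSy']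
      · rw [pow_two, AlgEquiv.mul_apply, hRSy', hRSy]
    have hs1 : piRes Lf Ψ ≠ 1 := by
      intro h1
      have hne := piRes_ne Lf Ψ 1 (Φ y) hy'N ?_
      · exact hne (h1.trans (map_one (piRes Lf)).symm)
      · rw [hΨy']
        exact fun hh => (neg_ne (Φ y) hy'0) hh.symm
    have hsr : piRes Lf Ψ ≠ piRes Lf R := by
      apply piRes_ne Lf Ψ R x hxN
      rw [hΨx, hRx]
      exact hxx
    have hsr2 : piRes Lf Ψ ≠ (piRes Lf R) ^ 2 := by
      rw [← map_pow]
      apply piRes_ne Lf Ψ (R ^ 2) y hyN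
      rw [hΨy, pow_two, AlgEquiv.mul_apply, hR2y]
      exact hyy
    have hsr3 : piRes Lf Ψ ≠ (piRes Lf R) ^ 3 := by
      rw [← map_pow]
      apply piRes_ne Lf Ψ (R ^ 3) x hxN
      rw [hΨx, pow_succ, pow_two, AlgEquiv.mul_apply, AlgEquiv.mul_apply, hRx, map_neg, hRx,
        neg_neg, hRx]
      exact hxx
    exact GL3 hcard (piRes Lf R) (piRes Lf Ψ) hr4 hr2ne hs2 hrs2 hs1 hsr hsr2 hsr3
end
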